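/- Let G be a strongly connected, weight-balanced digraph and suppose all objective functions f^i are identically zero. If α ≥ 2√2, then the agreement set S = {(1_n ⊗ x, 1_n ⊗ z)} is asymptotically stable under the linear dynamics ẋ = −α𝐋x − 𝐋z, ż = 𝐋x, i.e., every solution converges to S. -/

import Mathlib

open Matrix BigOperators Filter

/-- The Kronecker action `(L ⊗ I) m` written coordinatewise. -/
def agg14Bv {n d : ℕ} (L : Matrix (Fin n) (Fin n) ℝ) (m : Fin n × Fin d → ℝ) :
    Fin n × Fin d → ℝ :=
  fun q => ∑ j, L q.1 j * m (j, q.2)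

/-- Euclidean dot product on `Fin n × Fin d → ℝ`. -/
def agg14dot {N : Type*} [Fintype N] (f g : N → ℝ) : ℝ := ∑ q, f q * g q

/-- Projection removing the per-column average. -/
noncomputable def agg14proj {n d : ℕ} (f : Fin n × Fin d → ℝ) : Fin n × Fin d → ℝ :=
  fun q => f q - (∑ i, f (i, q.2)) / (n : ℝ)

lemma agg14_row_sum {n : ℕ} (A : Matrix (Fin n) (Fin n) ℝ)
    (L : Matrix (Fin n) (Fin n) ℝ)
    (hL : L = Matrix.diagonal (fun i => ∑ j, A i j) - A) (i : Fin n) :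
    ∑ j, L i j = 0 := by
  subst hL
  simp [Matrix.sub_apply, Matrix.diagonal_apply, Finset.sum_sub_distrib,
    Finset.sum_ite_eq]

lemma agg14_col_sum {n : ℕ} (A : Matrix (Fin n) (Fin n) ℝ)
    (hbal : ∀ i, ∑ j, A i j = ∑ j, A j i)
    (L : Matrix (Fin n) (Fin n) ℝ)
    (hL : L = Matrix.diagonal (fun i => ∑ j, A i j) - A) (j : Fin n) :
    ∑ i, L i j = 0 := by
  subst hL
  simp only [Matrix.sub_apply, Matrix.diagonal_apply, Finset.sum_sub_distrib]
  rw [Finset.sum_ite_eq' Finset.univ j (fun i => ∑ k, A i k)]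
  simp [hbal j]

/-- The key quadratic-form identity for the Laplacian of a weight-balanced digraph. -/
lemma agg14_quad {n : ℕ} (A : Matrix (Fin n) (Fin n) ℝ)
    (hbal : ∀ i, ∑ j, A i j = ∑ j, A j i)
    (L : Matrix (Fin n) (Fin n) ℝ)
    (hL : L = Matrix.diagonal (fun i => ∑ j, A i j) - A) (g : Fin n → ℝ) :
    ∑ i, ∑ j, L i j * (g i * g j)
      = (1/2) * ∑ i, ∑ j, A i j * (g i - g j)^2 := by
  subst hL
  have h1 : ∀ i : Fin n, ∑ j, (Matrix.diagonal (fun i => ∑ j, A i j) - A) i j * (g i * g j)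
      = (∑ j, A i j) * g i ^ 2 - ∑ j, A i j * (g i * g j) := by
    intro i
    simp only [Matrix.sub_apply, Matrix.diagonal_apply, sub_mul, Finset.sum_sub_distrib]
    congr 1
    simp only [ite_mul, zero_mul]
    rw [Finset.sum_ite_eq Finset.univ i (fun j => (∑ k, A i k) * (g i * g j))]
    simp only [Finset.mem_univ, if_true]
    ring
  rw [Finset.sum_congr rfl fun i _ => h1 i]
  have h2 : ∀ i j : Fin n, A i j * (g i - g j)^2
      = A i j * g i ^ 2 - 2 * (A i j * (g i * g j)) + A i j * g j ^ 2 := by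
    intro i j; ring
  have h3 : ∑ i, ∑ j, A i j * (g i - g j)^2
      = ∑ i, ∑ j, A i j * g i ^ 2 - 2 * ∑ i, ∑ j, A i j * (g i * g j)
        + ∑ i, ∑ j, A i j * g j ^ 2 := by
    rw [Finset.mul_sum]
    rw [← Finset.sum_sub_distrib, ← Finset.sum_add_distrib]
    refine Finset.sum_congr rfl fun i _ => ?_
    rw [Finset.mul_sum, ← Finset.sum_sub_distrib, ← Finset.sum_add_distrib]
    exact Finset.sum_congr rfl fun j _ => h2 i j
  have h4 : ∑ i, ∑ j, A i j * g j ^ 2 = ∑ i, (∑ j, A i j) * g i ^ 2 := by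
    rw [Finset.sum_comm]
    refine Finset.sum_congr rfl fun j _ => ?_
    rw [← Finset.sum_mul, ← hbal j]
  have h5 : ∑ i, ∑ j, A i j * g i ^ 2 = ∑ i, (∑ j, A i j) * g i ^ 2 := by
    refine Finset.sum_congr rfl fun i _ => ?_
    rw [← Finset.sum_mul]
  rw [Finset.sum_sub_distrib]
  rw [h3, h4, h5]; ring

/-- Q formula for the Kronecker form. -/
lemma agg14_Q_formula {n d : ℕ} (A : Matrix (Fin n) (Fin n) ℝ)
    (hbal : ∀ i, ∑ j, A i j = ∑ j, A j i)
    (L : Matrix (Fin n) (Fin n) ℝ)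
    (hL : L = Matrix.diagonal (fun i => ∑ j, A i j) - A)
    (m : Fin n × Fin d → ℝ) :
    agg14dot m (agg14Bv L m)
      = (1/2) * ∑ k, ∑ i, ∑ j, A i j * (m (i,k) - m (j,k))^2 := by
  have h0 : agg14dot m (agg14Bv L m)
      = ∑ k, ∑ i, ∑ j, L i j * (m (i,k) * m (j,k)) := by
    rw [agg14dot]
    rw [Fintype.sum_prod_type]
    rw [Finset.sum_comm]
    refine Finset.sum_congr rfl fun k _ => Finset.sum_congr rfl fun i _ => ?_
    rw [agg14Bv, Finset.mul_sum]
    exact Finset.sum_congr rfl fun j _ => by ring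
  rw [h0, Finset.mul_sum]
  exact Finset.sum_congr rfl fun k _ => by
    rw [agg14_quad A hbal L hL (fun i => m (i,k))]

lemma agg14_Q_nonneg {n d : ℕ} (A : Matrix (Fin n) (Fin n) ℝ)
    (hA : ∀ i j, 0 ≤ A i j)
    (hbal : ∀ i, ∑ j, A i j = ∑ j, A j i)
    (L : Matrix (Fin n) (Fin n) ℝ)
    (hL : L = Matrix.diagonal (fun i => ∑ j, A i j) - A)
    (m : Fin n × Fin d → ℝ) : 0 ≤ agg14dot m (agg14Bv L m) := by
  rw [agg14_Q_formula A hbal L hL m]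
  have : (0:ℝ) ≤ ∑ k, ∑ i, ∑ j, A i j * (m (i,k) - m (j,k))^2 :=
    Finset.sum_nonneg fun k _ => Finset.sum_nonneg fun i _ => Finset.sum_nonneg fun j _ =>
      mul_nonneg (hA i j) (sq_nonneg _)
  linarith

lemma agg14_Bv_lin {n d : ℕ} (L : Matrix (Fin n) (Fin n) ℝ)
    (a : ℝ) (f g : Fin n × Fin d → ℝ) (q : Fin n × Fin d) :
    agg14Bv L (fun p => a * f p + g p) q = a * agg14Bv L f q + agg14Bv L g q := by
  simp only [agg14Bv, mul_add, Finset.sum_add_distrib, Finset.mul_sum]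
  congr 1
  exact Finset.sum_congr rfl fun j _ => by ring

/-- Expansion of the quadratic form. -/
lemma agg14_Q_expand {n d : ℕ} (L : Matrix (Fin n) (Fin n) ℝ)
    (a : ℝ) (f g : Fin n × Fin d → ℝ) :
    agg14dot (fun q => a * f q + g q) (agg14Bv L (fun p => a * f p + g p))
      = a^2 * agg14dot f (agg14Bv L f)
        + a * (agg14dot f (agg14Bv L g) + agg14dot g (agg14Bv L f))
        + agg14dot g (agg14Bv L g) := by
  simp only [agg14dot]
  rw [Finset.sum_congr rfl fun q (_ : q ∈ Finset.univ) => by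
    rw [agg14_Bv_lin L a f g q]]
  have : ∀ q : Fin n × Fin d,
      (a * f q + g q) * (a * agg14Bv L f q + agg14Bv L g q)
        = a^2 * (f q * agg14Bv L f q)
          + a * (f q * agg14Bv L g q + g q * agg14Bv L f q)
          + g q * agg14Bv L g q := fun q => by ring
  rw [Finset.sum_congr rfl fun q _ => this q]
  simp only [mul_add, Finset.sum_add_distrib, Finset.mul_sum]

lemma agg14_Q_smul {n d : ℕ} (L : Matrix (Fin n) (Fin n) ℝ)
    (a : ℝ) (f : Fin n × Fin d → ℝ) :
    agg14dot (fun q => a * f q) (agg14Bv L (fun p => a * f p))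
      = a^2 * agg14dot f (agg14Bv L f) := by
  have h := agg14_Q_expand L a f (fun _ => 0)
  have hz : agg14Bv L (fun _ : Fin n × Fin d => (0:ℝ)) = fun _ => 0 := by
    funext q; simp [agg14Bv]
  simp only [add_zero] at h
  rw [h, hz]
  simp [agg14dot]

/-- Kernel characterization: zero quadratic form forces columnwise-constant vectors. -/
lemma agg14_Q_zero {n d : ℕ} (A : Matrix (Fin n) (Fin n) ℝ)
    (hA : ∀ i j, 0 ≤ A i j)
    (hconn : ∀ i j : Fin n, i ≠ j → Relation.TransGen (fun a b => 0 < A a b) i j)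
    (hbal : ∀ i, ∑ j, A i j = ∑ j, A j i)
    (L : Matrix (Fin n) (Fin n) ℝ)
    (hL : L = Matrix.diagonal (fun i => ∑ j, A i j) - A)
    (m : Fin n × Fin d → ℝ) (hm : agg14dot m (agg14Bv L m) = 0) :
    ∀ (p q : Fin n) (k : Fin d), m (p,k) = m (q,k) := by
  have hsum : ∑ k, ∑ i, ∑ j, A i j * (m (i,k) - m (j,k))^2 = 0 := by
    have := agg14_Q_formula A hbal L hL m
    rw [hm] at this; linarith
  have hterm : ∀ (k : Fin d) (i j : Fin n), A i j * (m (i,k) - m (j,k))^2 = 0 := by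
    intro k i j
    have h1 := (Finset.sum_eq_zero_iff_of_nonneg (fun k _ =>
      Finset.sum_nonneg fun i _ => Finset.sum_nonneg fun j _ =>
        mul_nonneg (hA _ _) (sq_nonneg _))).1 hsum k (Finset.mem_univ _)
    have h2 := (Finset.sum_eq_zero_iff_of_nonneg (fun i _ =>
      Finset.sum_nonneg fun j _ => mul_nonneg (hA _ _) (sq_nonneg _))).1 h1 i (Finset.mem_univ _)
    exact (Finset.sum_eq_zero_iff_of_nonneg (fun j _ =>
      mul_nonneg (hA _ _) (sq_nonneg _))).1 h2 j (Finset.mem_univ _)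
  intro p q k
  rcases eq_or_ne p q with rfl | hpq
  · rfl
  have hedge : ∀ a b : Fin n, 0 < A a b → m (a,k) = m (b,k) := by
    intro a b hab
    have h := hterm k a b
    have h2 : (m (a,k) - m (b,k))^2 = 0 := by
      rcases mul_eq_zero.1 h with h' | h'
      · exact absurd h' (ne_of_gt hab)
      · exact h'
    have := pow_eq_zero_iff (n := 2) (by norm_num) |>.1 h2
    linarith [sub_eq_zero.1 this]
  have hTG : ∀ a b : Fin n, Relation.TransGen (fun a b => 0 < A a b) a b → m (a,k) = m (b,k) := by
    intro a b h
    induction h with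
    | single h => exact hedge _ _ h
    | tail _ h ih => exact ih.trans (hedge _ _ h)
  exact hTG p q (hconn p q hpq)

lemma agg14_dot_nonneg {N : Type*} [Fintype N] (f : N → ℝ) : 0 ≤ agg14dot f f :=
  Finset.sum_nonneg fun q _ => mul_self_nonneg _

lemma agg14_dot_coord {N : Type*} [Fintype N] (f : N → ℝ) (q : N) :
    f q * f q ≤ agg14dot f f :=
  Finset.single_le_sum (fun p (_ : p ∈ Finset.univ) => mul_self_nonneg (f p))
    (Finset.mem_univ q)

/-- Spectral gap: on the subspace of zero-column-sum vectors, `Q` dominates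
a positive multiple of the norm squared. -/
lemma agg14_gap {n d : ℕ} (hn : 0 < n) (A : Matrix (Fin n) (Fin n) ℝ)
    (hA : ∀ i j, 0 ≤ A i j)
    (hconn : ∀ i j : Fin n, i ≠ j → Relation.TransGen (fun a b => 0 < A a b) i j)
    (hbal : ∀ i, ∑ j, A i j = ∑ j, A j i)
    (L : Matrix (Fin n) (Fin n) ℝ)
    (hL : L = Matrix.diagonal (fun i => ∑ j, A i j) - A) :
    ∃ lam : ℝ, 0 < lam ∧ ∀ m : Fin n × Fin d → ℝ, (∀ k, ∑ i, m (i,k) = 0) →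
      lam * agg14dot m m ≤ agg14dot m (agg14Bv L m) := by
  classical
  set K : Set (Fin n × Fin d → ℝ) :=
    {m | (∀ k, ∑ i, m (i,k) = 0) ∧ agg14dot m m = 1} with hK
  -- membership of normalized vectors
  have hnormalize : ∀ m : Fin n × Fin d → ℝ, (∀ k, ∑ i, m (i,k) = 0) →
      agg14dot m m ≠ 0 → (fun q => (Real.sqrt (agg14dot m m))⁻¹ * m q) ∈ K := by
    intro m hcol hne
    have hpos : 0 < agg14dot m m := lt_of_le_of_ne (agg14_dot_nonneg m) (Ne.symm hne)
    constructor
    · intro k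
      rw [← Finset.mul_sum]
      rw [hcol k, mul_zero]
    · have : agg14dot (fun q => (Real.sqrt (agg14dot m m))⁻¹ * m q)
          (fun q => (Real.sqrt (agg14dot m m))⁻¹ * m q)
          = ((Real.sqrt (agg14dot m m))⁻¹)^2 * agg14dot m m := by
        simp only [agg14dot, Finset.mul_sum]
        exact Finset.sum_congr rfl fun q _ => by ring
      rw [this, ← Real.sqrt_inv, Real.sq_sqrt (inv_nonneg.2 hpos.le)]
      field_simp
  have hQcont : Continuous (fun m : Fin n × Fin d → ℝ => agg14dot m (agg14Bv L m)) := by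
    apply continuous_finset_sum
    intro q _
    exact (continuous_apply q).mul
      (continuous_finset_sum _ fun j _ => continuous_const.mul (continuous_apply (j, q.2)))
  rcases Set.eq_empty_or_nonempty K with hKe | hKne
  · refine ⟨1, one_pos, fun m hcol => ?_⟩
    by_cases hz : agg14dot m m = 0
    · rw [hz, mul_zero]
      exact agg14_Q_nonneg A hA hbal L hL m
    · exact absurd (hnormalize m hcol hz) (by rw [hKe]; exact Set.notMem_empty _)
  · -- K is compact
    have hclosed : IsClosed K := by
      have hKeq : K = (⋂ k : Fin d, {m : Fin n × Fin d → ℝ | ∑ i, m (i,k) = 0})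
          ∩ {m : Fin n × Fin d → ℝ | agg14dot m m = 1} := by
        ext m
        simp only [hK, Set.mem_setOf_eq, Set.mem_inter_iff, Set.mem_iInter]
      rw [hKeq]
      apply IsClosed.inter
      · exact isClosed_iInter fun k => isClosed_eq
          (continuous_finset_sum _ fun i _ =>
            continuous_apply ((i, k) : Fin n × Fin d)) continuous_const
      · exact isClosed_eq
          (continuous_finset_sum _ fun q _ => (continuous_apply q).mul (continuous_apply q))
          continuous_const
    have hsub : K ⊆ Metric.closedBall 0 1 := by
      intro m hm
      rw [Metric.mem_closedBall, dist_zero_right]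
      refine (pi_norm_le_iff_of_nonneg zero_le_one).2 fun q => ?_
      rw [Real.norm_eq_abs]
      have hle : m q * m q ≤ 1 := by
        rw [← hm.2]; exact agg14_dot_coord m q
      exact abs_le_one_iff_mul_self_le_one.2 hle
    have hKcomp : IsCompact K :=
      (isCompact_closedBall (0 : Fin n × Fin d → ℝ) 1).of_isClosed_subset hclosed hsub
    obtain ⟨m₀, hm₀K, hm₀min⟩ := hKcomp.exists_isMinOn hKne hQcont.continuousOn
    set lam := agg14dot m₀ (agg14Bv L m₀) with hlam
    have hlamnn : 0 ≤ lam := agg14_Q_nonneg A hA hbal L hL m₀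
    have hlampos : 0 < lam := by
      rcases lt_or_eq_of_le hlamnn with h | h
      · exact h
      · exfalso
        have hconst := agg14_Q_zero A hA hconn hbal L hL m₀ h.symm
        have hzero : m₀ = 0 := by
          funext q
          have hcol := hm₀K.1 q.2
          have hsum : ∑ i, m₀ (i, q.2) = (n:ℝ) * m₀ q := by
            rw [Finset.sum_congr rfl fun i (_ : i ∈ Finset.univ) => hconst i q.1 q.2]
            simp [Finset.sum_const, Finset.card_univ, nsmul_eq_mul]
          rw [hsum] at hcol
          exact (mul_eq_zero.1 hcol).resolve_left (Nat.cast_ne_zero.2 hn.ne')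
        have := hm₀K.2
        rw [hzero] at this
        simp [agg14dot] at this
    refine ⟨lam, hlampos, fun m hcol => ?_⟩
    by_cases hz : agg14dot m m = 0
    · rw [hz, mul_zero]
      exact agg14_Q_nonneg A hA hbal L hL m
    · have hpos : 0 < agg14dot m m := lt_of_le_of_ne (agg14_dot_nonneg m) (Ne.symm hz)
      set c := (Real.sqrt (agg14dot m m))⁻¹ with hc
      have hmem := hnormalize m hcol hz
      have hmin := hm₀min hmem
      have hQc : agg14dot (fun q => c * m q) (agg14Bv L (fun p => c * m p))
          = c^2 * agg14dot m (agg14Bv L m) := agg14_Q_smul L c m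
      have hc2 : c^2 = (agg14dot m m)⁻¹ := by
        rw [hc, ← Real.sqrt_inv, Real.sq_sqrt (inv_nonneg.2 hpos.le)]
      have : lam ≤ c^2 * agg14dot m (agg14Bv L m) := by
        rw [← hQc]; exact hmin
      rw [hc2] at this
      rw [mul_comm]
      calc agg14dot m m * lam ≤ agg14dot m m * ((agg14dot m m)⁻¹ * agg14dot m (agg14Bv L m)) := by
            exact mul_le_mul_of_nonneg_left this hpos.le
        _ = agg14dot m (agg14Bv L m) := by field_simp

lemma agg14_Bv_proj {n d : ℕ} (A : Matrix (Fin n) (Fin n) ℝ)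
    (L : Matrix (Fin n) (Fin n) ℝ)
    (hL : L = Matrix.diagonal (fun i => ∑ j, A i j) - A)
    (f : Fin n × Fin d → ℝ) (q : Fin n × Fin d) :
    agg14Bv L (agg14proj f) q = agg14Bv L f q := by
  simp only [agg14Bv, agg14proj, mul_sub, Finset.sum_sub_distrib]
  rw [← Finset.sum_mul, agg14_row_sum A L hL q.1, zero_mul, sub_zero]

lemma agg14_Bv_colsum {n d : ℕ} (A : Matrix (Fin n) (Fin n) ℝ)
    (hbal : ∀ i, ∑ j, A i j = ∑ j, A j i)
    (L : Matrix (Fin n) (Fin n) ℝ)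
    (hL : L = Matrix.diagonal (fun i => ∑ j, A i j) - A)
    (m : Fin n × Fin d → ℝ) (k : Fin d) :
    ∑ i, agg14Bv L m (i,k) = 0 := by
  simp only [agg14Bv]
  rw [Finset.sum_comm]
  rw [Finset.sum_congr rfl fun j (_ : j ∈ Finset.univ) => by
    rw [← Finset.sum_mul, agg14_col_sum A hbal L hL j, zero_mul]]
  simp

lemma agg14_proj_colsum {n d : ℕ} (hn : 0 < n) (f : Fin n × Fin d → ℝ) (k : Fin d) :
    ∑ i, agg14proj f (i,k) = 0 := by
  simp only [agg14proj, Finset.sum_sub_distrib, Finset.sum_const, Finset.card_univ,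
    Fintype.card_fin, nsmul_eq_mul]
  have hnne : (n:ℝ) ≠ 0 := Nat.cast_ne_zero.2 hn.ne'
  field_simp
  ring


set_option maxHeartbeats 2000000 in
/-- For a strongly connected, weight-balanced digraph with all objective
functions zero, if `α ≥ 2√2` then the agreement set
`S = {(1_n ⊗ x, 1_n ⊗ z)}` is asymptotically stable under `ẋ = −α𝐋x − 𝐋z, ż = 𝐋x`:
every solution converges to `S`. -/
theorem agreement_set_asymptotically_stable
    {n d : ℕ}
    (A : Matrix (Fin n) (Fin n) ℝ)
    (hA : ∀ i j, 0 ≤ A i j)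
    (hconn : ∀ i j : Fin n, i ≠ j → Relation.TransGen (fun a b => 0 < A a b) i j)
    (hbal : ∀ i, ∑ j, A i j = ∑ j, A j i)
    (L : Matrix (Fin n) (Fin n) ℝ)
    (hL : L = Matrix.diagonal (fun i => ∑ j, A i j) - A)
    (BL : Matrix (Fin n × Fin d) (Fin n × Fin d) ℝ)
    (hBL : BL = Matrix.kroneckerMap (· * ·) L (1 : Matrix (Fin d) (Fin d) ℝ))
    (α : ℝ) (hα : 2 * Real.sqrt 2 ≤ α)
    (x z : ℝ → (Fin n × Fin d → ℝ))
    (hx : ∀ t, HasDerivAt x (-(α • (BL *ᵥ x t)) - BL *ᵥ z t) t)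
    (hz : ∀ t, HasDerivAt z (BL *ᵥ x t) t) :
    Tendsto (fun t => Metric.infDist (x t, z t)
        {p : (Fin n × Fin d → ℝ) × (Fin n × Fin d → ℝ) |
          ∃ a b : Fin d → ℝ, p.1 = (fun q => a q.2) ∧ p.2 = (fun q => b q.2)})
      atTop (nhds 0) := by


  classical
  set S : Set ((Fin n × Fin d → ℝ) × (Fin n × Fin d → ℝ)) :=
    {p | ∃ a b : Fin d → ℝ, p.1 = (fun q => a q.2) ∧ p.2 = (fun q => b q.2)} with hS
  rcases Nat.eq_zero_or_pos n with rfl | hn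
  · -- degenerate case: no agents
    have hmem : ∀ t, (x t, z t) ∈ S := fun t =>
      ⟨fun _ => 0, fun _ => 0, funext fun q => q.1.elim0, funext fun q => q.1.elim0⟩
    have : (fun t => Metric.infDist (x t, z t) S) = fun _ => (0:ℝ) :=
      funext fun t => Metric.infDist_zero_of_mem (hmem t)
    rw [this]
    exact tendsto_const_nhds
  -- constants
  have h2s : (0:ℝ) < Real.sqrt 2 := Real.sqrt_pos.2 two_pos
  have hαpos : 0 < α := lt_of_lt_of_le (by positivity) hα
  have hsq2 : Real.sqrt 2 ^ 2 = 2 := Real.sq_sqrt (by norm_num)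
  have h8 : (8:ℝ) ≤ α^2 := by nlinarith
  set s0 := Real.sqrt (α^2 - 8) with hs0
  have hs0sq : s0^2 = α^2 - 8 := Real.sq_sqrt (by linarith)
  have hs0nn : 0 ≤ s0 := Real.sqrt_nonneg _
  have hs0lt : s0 < α := by nlinarith
  set β := (α - s0)/2 with hβ
  have hβpos : 0 < β := by rw [hβ]; linarith
  have hβeq : β^2 - α*β + 2 = 0 := by rw [hβ]; nlinarith [hs0sq]
  have hβeq2 : β*(α-β) = 2 := by nlinarith [hβeq]
  have hαβ : α - β = 2/β := by
    field_simp
    nlinarith [hβeq2]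
  -- translation of the matrix action
  have hmul : ∀ m : Fin n × Fin d → ℝ, BL *ᵥ m = agg14Bv L m := by
    intro m; funext q
    simp only [hBL, Matrix.mulVec, dotProduct, Matrix.kroneckerMap_apply,
      Matrix.one_apply, agg14Bv]
    rw [Fintype.sum_prod_type]
    refine Finset.sum_congr rfl fun j _ => ?_
    simp [mul_ite, ite_mul, Finset.sum_ite_eq]
  -- named dynamics
  set X : ℝ → Fin n × Fin d → ℝ :=
    fun t q => -(α * agg14Bv L (x t) q) - agg14Bv L (z t) q with hX
  set Y : ℝ → Fin n × Fin d → ℝ :=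
    fun t q => β * X t q + agg14Bv L (x t) q with hY
  set u : ℝ → Fin n × Fin d → ℝ := fun t => agg14proj (x t) with hu
  set v : ℝ → Fin n × Fin d → ℝ :=
    fun t => agg14proj (fun q => β * x t q + z t q) with hv
  set W : ℝ → ℝ := fun t => agg14dot (u t) (u t) + agg14dot (v t) (v t) with hW
  set D : ℝ → ℝ :=
    fun t => 2 * agg14dot (u t) (X t) + 2 * agg14dot (v t) (Y t) with hD
  -- coordinatewise derivatives
  have hx' : ∀ t q, HasDerivAt (fun s => x s q) (X t q) t := by
    intro t q
    have h := (hasDerivAt_pi.1 (hx t)) q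
    have he : (-(α • (BL *ᵥ x t)) - BL *ᵥ z t) q = X t q := by
      simp [hmul, hX, Pi.smul_apply, smul_eq_mul]
    rwa [he] at h
  have hz' : ∀ t q, HasDerivAt (fun s => z s q) (agg14Bv L (x t) q) t := by
    intro t q
    have h := (hasDerivAt_pi.1 (hz t)) q
    rwa [hmul (x t)] at h
  -- column sums of the derivatives vanish
  have hXcol : ∀ t k, ∑ i, X t (i,k) = 0 := by
    intro t k
    have h1 := agg14_Bv_colsum A hbal L hL (x t) k
    have h2 := agg14_Bv_colsum A hbal L hL (z t) k
    simp only [hX]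
    rw [Finset.sum_sub_distrib]
    simp only [Finset.sum_neg_distrib, ← Finset.mul_sum]
    rw [h1, h2]; ring
  have hYcol : ∀ t k, ∑ i, Y t (i,k) = 0 := by
    intro t k
    have h1 := agg14_Bv_colsum A hbal L hL (x t) k
    simp only [hY]
    rw [Finset.sum_add_distrib, ← Finset.mul_sum, hXcol t k, h1]; ring
  -- derivatives of u, v coordinates
  have hu' : ∀ t q, HasDerivAt (fun s => u s q) (X t q) t := by
    intro t q
    have h1 : HasDerivAt (fun s => (∑ i, x s (i, q.2)) / (n:ℝ))
        ((∑ i, X t (i, q.2)) / (n:ℝ)) t :=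
      (HasDerivAt.fun_sum fun i _ => hx' t (i, q.2)).div_const _
    have h2 := (hx' t q).fun_sub h1
    rw [hXcol t q.2] at h2
    simpa only [hu, agg14proj, zero_div, sub_zero] using h2
  have hv' : ∀ t q, HasDerivAt (fun s => v s q) (Y t q) t := by
    intro t q
    have hco : ∀ q' : Fin n × Fin d,
        HasDerivAt (fun s => β * x s q' + z s q') (Y t q') t := fun q' => by
      have := ((hx' t q').const_mul β).fun_add (hz' t q')
      simpa only [hY] using this
    have h1 : HasDerivAt (fun s => (∑ i, (β * x s (i, q.2) + z s (i, q.2))) / (n:ℝ))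
        ((∑ i, Y t (i, q.2)) / (n:ℝ)) t :=
      (HasDerivAt.fun_sum fun i _ => hco (i, q.2)).div_const _
    have h2 := (hco q).fun_sub h1
    rw [hYcol t q.2] at h2
    simpa only [hv, agg14proj, zero_div, sub_zero] using h2
  -- algebraic identities
  have hBvu : ∀ t q, agg14Bv L (u t) q = agg14Bv L (x t) q := fun t q => by
    rw [hu]; exact agg14_Bv_proj A L hL (x t) q
  have hBvv : ∀ t q, agg14Bv L (v t) q
      = β * agg14Bv L (x t) q + agg14Bv L (z t) q := fun t q => by
    rw [hv]
    rw [agg14_Bv_proj A L hL _ q]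
    exact agg14_Bv_lin L β (x t) (z t) q
  have hXid : ∀ t q, X t q = (β - α) * agg14Bv L (u t) q - agg14Bv L (v t) q := by
    intro t q; rw [hBvu, hBvv, hX]; ring
  have hYid : ∀ t q, Y t q = -(agg14Bv L (u t) q) - β * agg14Bv L (v t) q := by
    intro t q
    rw [hBvu, hBvv, hY, hX]
    linear_combination (agg14Bv L (x t) q) * hβeq
  -- derivative of W
  have hW' : ∀ t, HasDerivAt W (D t) t := by
    intro t
    have h1 : HasDerivAt (fun s => agg14dot (u s) (u s))
        (∑ q, (X t q * u t q + u t q * X t q)) t := by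
      simp only [agg14dot]
      exact HasDerivAt.fun_sum fun q _ => (hu' t q).fun_mul (hu' t q)
    have h2 : HasDerivAt (fun s => agg14dot (v s) (v s))
        (∑ q, (Y t q * v t q + v t q * Y t q)) t := by
      simp only [agg14dot]
      exact HasDerivAt.fun_sum fun q _ => (hv' t q).fun_mul (hv' t q)
    have e1 : ∑ q, (X t q * u t q + u t q * X t q) = 2 * agg14dot (u t) (X t) := by
      rw [agg14dot, Finset.mul_sum]
      exact Finset.sum_congr rfl fun q _ => by ring
    have e2 : ∑ q, (Y t q * v t q + v t q * Y t q) = 2 * agg14dot (v t) (Y t) := by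
      rw [agg14dot, Finset.mul_sum]
      exact Finset.sum_congr rfl fun q _ => by ring
    have h3 := h1.add h2
    rw [e1, e2] at h3
    exact h3
  -- spectral gap
  obtain ⟨lam, hlampos, hlam⟩ := agg14_gap (d := d) hn A hA hconn hbal L hL
  have hucol : ∀ t k, ∑ i, u t (i,k) = 0 := fun t k => by
    rw [hu]; exact agg14_proj_colsum hn (x t) k
  have hvcol : ∀ t k, ∑ i, v t (i,k) = 0 := fun t k => by
    rw [hv]; exact agg14_proj_colsum hn _ k
  have hQunn : ∀ t, 0 ≤ agg14dot (u t) (agg14Bv L (u t)) := fun t =>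
    agg14_Q_nonneg A hA hbal L hL (u t)
  have hQvnn : ∀ t, 0 ≤ agg14dot (v t) (agg14Bv L (v t)) := fun t =>
    agg14_Q_nonneg A hA hbal L hL (v t)
  -- dot product expansions
  have hdotuX : ∀ t, agg14dot (u t) (X t)
      = (β-α) * agg14dot (u t) (agg14Bv L (u t)) - agg14dot (u t) (agg14Bv L (v t)) := by
    intro t
    simp only [agg14dot]
    rw [Finset.mul_sum, ← Finset.sum_sub_distrib]
    refine Finset.sum_congr rfl fun q _ => ?_
    rw [hXid t q]; ring
  have hdotvY : ∀ t, agg14dot (v t) (Y t)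
      = -(agg14dot (v t) (agg14Bv L (u t))) - β * agg14dot (v t) (agg14Bv L (v t)) := by
    intro t
    simp only [agg14dot]
    rw [Finset.mul_sum, ← Finset.sum_neg_distrib, ← Finset.sum_sub_distrib]
    refine Finset.sum_congr rfl fun q _ => ?_
    rw [hYid t q]; ring
  -- the key differential inequality
  set c : ℝ := min (1/β) (2*β/3) with hc
  have hcpos : 0 < c := lt_min (by positivity) (by positivity)
  set ε : ℝ := c * lam with hε
  have hεpos : 0 < ε := mul_pos hcpos hlampos
  have hDle : ∀ t, D t ≤ -ε * W t := by
    intro t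
    have hcrossQ : 0 ≤ (3/(2*β))^2 * agg14dot (u t) (agg14Bv L (u t))
        + (3/(2*β)) * (agg14dot (u t) (agg14Bv L (v t))
          + agg14dot (v t) (agg14Bv L (u t)))
        + agg14dot (v t) (agg14Bv L (v t)) := by
      rw [← agg14_Q_expand L (3/(2*β)) (u t) (v t)]
      exact agg14_Q_nonneg A hA hbal L hL _
    have hβne : β ≠ 0 := ne_of_gt hβpos
    have h3 : 0 ≤ (3/β) * agg14dot (u t) (agg14Bv L (u t))
        + 2 * (agg14dot (u t) (agg14Bv L (v t)) + agg14dot (v t) (agg14Bv L (u t)))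
        + (4*β/3) * agg14dot (v t) (agg14Bv L (v t)) := by
      have h2 := mul_nonneg (by positivity : (0:ℝ) ≤ 4*β/3) hcrossQ
      have e : (4*β/3) * ((3/(2*β))^2 * agg14dot (u t) (agg14Bv L (u t))
          + (3/(2*β)) * (agg14dot (u t) (agg14Bv L (v t))
            + agg14dot (v t) (agg14Bv L (u t)))
          + agg14dot (v t) (agg14Bv L (v t)))
          = (3/β) * agg14dot (u t) (agg14Bv L (u t))
          + 2 * (agg14dot (u t) (agg14Bv L (v t)) + agg14dot (v t) (agg14Bv L (u t)))
          + (4*β/3) * agg14dot (v t) (agg14Bv L (v t)) := by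
        field_simp
        ring
      rwa [e] at h2
    have hstep : D t ≤ -(1/β) * agg14dot (u t) (agg14Bv L (u t))
        - (2*β/3) * agg14dot (v t) (agg14Bv L (v t)) := by
      have hDeq : D t = 2*(β-α) * agg14dot (u t) (agg14Bv L (u t))
          - 2 * (agg14dot (u t) (agg14Bv L (v t)) + agg14dot (v t) (agg14Bv L (u t)))
          - 2*β * agg14dot (v t) (agg14Bv L (v t)) := by
        simp only [hD]
        rw [hdotuX t, hdotvY t]; ring
      have hba : β - α = -(2/β) := by rw [← hαβ]; ring
      rw [hDeq, hba]
      ring_nf at h3 ⊢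
      linarith [h3]
    have hgu := hlam (u t) (hucol t)
    have hgv := hlam (v t) (hvcol t)
    have hc1 : c ≤ 1/β := min_le_left _ _
    have hc2 : c ≤ 2*β/3 := min_le_right _ _
    have a1 : c * agg14dot (u t) (agg14Bv L (u t))
        ≤ (1/β) * agg14dot (u t) (agg14Bv L (u t)) :=
      mul_le_mul_of_nonneg_right hc1 (hQunn t)
    have a2 : c * agg14dot (v t) (agg14Bv L (v t))
        ≤ (2*β/3) * agg14dot (v t) (agg14Bv L (v t)) :=
      mul_le_mul_of_nonneg_right hc2 (hQvnn t)
    have a3 : c * (lam * agg14dot (u t) (u t)) ≤ c * agg14dot (u t) (agg14Bv L (u t)) :=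
      mul_le_mul_of_nonneg_left hgu hcpos.le
    have a4 : c * (lam * agg14dot (v t) (v t)) ≤ c * agg14dot (v t) (agg14Bv L (v t)) :=
      mul_le_mul_of_nonneg_left hgv hcpos.le
    have hWeq : -ε * W t = -(c * (lam * agg14dot (u t) (u t)))
        - (c * (lam * agg14dot (v t) (v t))) := by
      simp only [hε, hW]; ring
    rw [hWeq]
    ring_nf at hstep a1 a2 a3 a4 ⊢
    linarith
  -- Gronwall via antitonicity of W t * exp (ε t)
  have hWnn : ∀ t, 0 ≤ W t := fun t => by
    simp only [hW]
    exact add_nonneg (agg14_dot_nonneg (u t)) (agg14_dot_nonneg (v t))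
  have hg' : ∀ t, HasDerivAt (fun s => W s * Real.exp (ε * s))
      ((D t + ε * W t) * Real.exp (ε * t)) t := by
    intro t
    have he : HasDerivAt (fun s : ℝ => Real.exp (ε * s)) (ε * Real.exp (ε * t)) t := by
      have h1 : HasDerivAt (fun s : ℝ => ε * s) ε t := by
        simpa using (hasDerivAt_id t).const_mul ε
      simpa [mul_comm] using h1.exp
    have h2 := (hW' t).fun_mul he
    have e : (D t + ε * W t) * Real.exp (ε * t)
        = D t * Real.exp (ε * t) + W t * (ε * Real.exp (ε * t)) := by ring
    rw [e]; exact h2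
  have hanti : Antitone (fun s => W s * Real.exp (ε * s)) := by
    refine antitone_of_hasDerivAt_nonpos hg' fun t => ?_
    have := hDle t
    have hWt := hWnn t
    apply mul_nonpos_of_nonpos_of_nonneg
    · linarith
    · exact (Real.exp_pos _).le
  have hWle : ∀ t : ℝ, 0 ≤ t → W t ≤ W 0 * Real.exp (-(ε * t)) := by
    intro t ht
    have h := hanti ht
    simp only [mul_zero, Real.exp_zero, mul_one] at h
    have hepos : 0 < Real.exp (ε*t) := Real.exp_pos _
    rw [Real.exp_neg]
    calc W t = W t * Real.exp (ε*t) * (Real.exp (ε*t))⁻¹ := by field_simp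
      _ ≤ W 0 * (Real.exp (ε*t))⁻¹ :=
        mul_le_mul_of_nonneg_right h (inv_nonneg.2 hepos.le)
  have hWtend : Tendsto W atTop (nhds 0) := by
    have h1 : Tendsto (fun t : ℝ => ε * t) atTop atTop :=
      Tendsto.const_mul_atTop hεpos tendsto_id
    have h2 : Tendsto (fun t : ℝ => -(ε * t)) atTop atBot :=
      tendsto_neg_atTop_atBot.comp h1
    have h3 : Tendsto (fun t : ℝ => W 0 * Real.exp (-(ε*t))) atTop (nhds 0) := by
      have := (Real.tendsto_exp_atBot.comp h2).const_mul (W 0)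
      simpa using this
    exact squeeze_zero' (Eventually.of_forall hWnn)
      ((eventually_ge_atTop (0:ℝ)).mono fun t ht => hWle t ht) h3
  -- final bound on the distance
  have hCpos : (1:ℝ) ≤ 2 + 2*β^2 := by nlinarith [sq_nonneg β]
  have hbound : ∀ t, Metric.infDist (x t, z t) S ≤ Real.sqrt ((2 + 2*β^2) * W t) := by
    intro t
    have hmemS : ((fun q : Fin n × Fin d => (∑ i, x t (i,q.2))/(n:ℝ)),
        (fun q : Fin n × Fin d => (∑ i, z t (i,q.2))/(n:ℝ))) ∈ S :=
      ⟨fun k => (∑ i, x t (i,k))/(n:ℝ), fun k => (∑ i, z t (i,k))/(n:ℝ), rfl, rfl⟩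
    refine le_trans (Metric.infDist_le_dist_of_mem hmemS) ?_
    rw [Prod.dist_eq]
    have hWCW : W t ≤ (2 + 2*β^2) * W t := le_mul_of_one_le_left (hWnn t) hCpos
    apply max_le
    · refine (dist_pi_le_iff (Real.sqrt_nonneg _)).2 fun q => ?_
      rw [Real.dist_eq]
      have h1 : x t q - (∑ i, x t (i,q.2))/(n:ℝ) = u t q := by rw [hu]; rfl
      have h2 : (u t q)^2 ≤ (2 + 2*β^2) * W t := by
        have hco := agg14_dot_coord (u t) q
        have hvnn := agg14_dot_nonneg (v t)
        simp only [hW] at hWCW ⊢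
        rw [pow_two]
        linarith
      calc |x t q - (∑ i, x t (i,q.2))/(n:ℝ)| = |u t q| := by rw [h1]
        _ = Real.sqrt ((u t q)^2) := (Real.sqrt_sq_eq_abs _).symm
        _ ≤ Real.sqrt ((2 + 2*β^2) * W t) := Real.sqrt_le_sqrt h2
    · refine (dist_pi_le_iff (Real.sqrt_nonneg _)).2 fun q => ?_
      rw [Real.dist_eq]
      have h1 : z t q - (∑ i, z t (i,q.2))/(n:ℝ) = v t q - β * u t q := by
        rw [hu, hv]
        simp only [agg14proj]
        have hsplit : ∑ i, (β * x t (i,q.2) + z t (i,q.2))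
            = β * ∑ i, x t (i,q.2) + ∑ i, z t (i,q.2) := by
          rw [Finset.sum_add_distrib, Finset.mul_sum]
        rw [hsplit]
        ring
      have h2 : (v t q - β * u t q)^2 ≤ (2 + 2*β^2) * W t := by
        have hcu := agg14_dot_coord (u t) q
        have hcv := agg14_dot_coord (v t) q
        have hunn := agg14_dot_nonneg (u t)
        have hvnn := agg14_dot_nonneg (v t)
        simp only [hW]
        nlinarith [sq_nonneg (v t q + β * u t q),
          mul_nonneg (sq_nonneg β) (sub_nonneg.2 hcu),
          mul_nonneg (sq_nonneg β) hvnn]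
      calc |z t q - (∑ i, z t (i,q.2))/(n:ℝ)| = |v t q - β * u t q| := by rw [h1]
        _ = Real.sqrt ((v t q - β * u t q)^2) := (Real.sqrt_sq_eq_abs _).symm
        _ ≤ Real.sqrt ((2 + 2*β^2) * W t) := Real.sqrt_le_sqrt h2
  -- conclude
  have hsq : Tendsto (fun t => Real.sqrt ((2 + 2*β^2) * W t)) atTop (nhds 0) := by
    have h1 : Tendsto (fun t => (2 + 2*β^2) * W t) atTop (nhds 0) := by
      simpa using hWtend.const_mul (2 + 2*β^2)
    have h2 := (Real.continuous_sqrt.tendsto 0).comp h1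
    simpa [Function.comp_def] using h2
  exact squeeze_zero (fun t => Metric.infDist_nonneg) hbound hsq
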